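/- If a permutation w of {1,...,n} avoids both patterns 1423 and 1432, then its Lehmer code L satisfies L(i+1) - L(i) ≤ 1 for every index i with 1 ≤ i < n. -/
import Mathlib


/-- Lehmer code: `lehmer w i = #{j > i : w j < w i}`. -/
def lehmer {n : ℕ} (w : Equiv.Perm (Fin n)) (i : Fin n) : ℕ :=
  (Finset.univ.filter (fun j => i < j ∧ w j < w i)).card

/-- `w` contains the pattern `σ` (given as a function `Fin k → Fin k`). -/
def ContainsPattern {n k : ℕ} (w : Equiv.Perm (Fin n)) (σ : Fin k → Fin k) : Prop :=
  ∃ f : Fin k → Fin n, StrictMono f ∧ ∀ a b : Fin k, σ a < σ b ↔ w (f a) < w (f b)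

/-- The pattern 1423 (0-indexed values). -/
def p1423 : Fin 4 → Fin 4 := ![0, 3, 1, 2]

/-- The pattern 1432 (0-indexed values). -/
def p1432 : Fin 4 → Fin 4 := ![0, 3, 2, 1]

lemma sm4 {n : ℕ} (a b c d : Fin n) (hab : a < b) (hbc : b < c) (hcd : c < d) :
    StrictMono (![a, b, c, d]) := by
  intro x y hxy
  fin_cases x <;> fin_cases y <;>
    simp_all [Matrix.cons_val_zero, Matrix.cons_val_one] <;>
    first
      | exact hab | exact hbc | exact hcd
      | exact hab.trans hbc | exact hbc.trans hcd | exact (hab.trans hbc).trans hcd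
      | exact absurd hxy (by decide)

lemma no_two {n : ℕ} (w : Equiv.Perm (Fin n))
    (h1423 : ¬ ContainsPattern w p1423) (h1432 : ¬ ContainsPattern w p1432)
    (a b c d : Fin n) (hab : a < b) (hbc : b < c) (hcd : c < d)
    (h1 : w a < w b) (h2 : w c < w b) (h3 : w d < w b)
    (h4 : w a < w c) (h5 : w a < w d) : False := by
  have hne : w c ≠ w d := fun h => hcd.ne (w.injective h)
  rcases hne.lt_or_gt with h6 | h6
  · apply h1423
    refine ⟨![a, b, c, d], sm4 a b c d hab hbc hcd, ?_⟩
    intro x y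
    fin_cases x <;> fin_cases y <;>
      simp [p1423] <;>
      first
        | assumption
        | exact h1.le | exact h2.le | exact h3.le | exact h4.le | exact h5.le | exact h6.le
        | exact lt_irrefl _
        | exact lt_asymm ‹_›
        | (intro h; first | exact absurd h (lt_asymm ‹_›) | exact lt_irrefl _ h)
  · apply h1432
    refine ⟨![a, b, c, d], sm4 a b c d hab hbc hcd, ?_⟩
    intro x y
    fin_cases x <;> fin_cases y <;>
      simp [p1432] <;>
      first
        | assumption
        | exact h1.le | exact h2.le | exact h3.le | exact h4.le | exact h5.le | exact h6.le
        | exact lt_irrefl _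
        | exact lt_asymm ‹_›
        | (intro h; first | exact absurd h (lt_asymm ‹_›) | exact lt_irrefl _ h)

theorem stmt_0 {n : ℕ} (w : Equiv.Perm (Fin n))
    (h1423 : ¬ ContainsPattern w p1423) (h1432 : ¬ ContainsPattern w p1432) :
    ∀ i : ℕ, ∀ hi : i + 1 < n,
      lehmer w ⟨i + 1, hi⟩ ≤ lehmer w ⟨i, Nat.lt_of_succ_lt hi⟩ + 1 := by
  intro i hi
  set a : Fin n := ⟨i, Nat.lt_of_succ_lt hi⟩ with ha
  set b : Fin n := ⟨i + 1, hi⟩ with hb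
  have hab : a < b := by simp [ha, hb, Fin.lt_def]
  have hwab : w a ≠ w b := fun h => hab.ne (w.injective h)
  rcases hwab.lt_or_gt with hlt | hgt
  · -- w a < w b : main case
    set T := Finset.univ.filter (fun j => b < j ∧ w j < w b) with hT
    set U := Finset.univ.filter (fun j => b < j ∧ w j < w a) with hU
    have hUT : U ⊆ T := by
      intro j hj
      simp only [hU, hT, Finset.mem_filter, Finset.mem_univ, true_and] at hj ⊢
      exact ⟨hj.1, hj.2.trans hlt⟩
    have hUa : U.card ≤ lehmer w a := by
      apply Finset.card_le_card
      intro j hj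
      simp only [hU, Finset.mem_filter, Finset.mem_univ, true_and] at hj
      simp only [lehmer, Finset.mem_filter, Finset.mem_univ, true_and]
      exact ⟨hab.trans hj.1, hj.2⟩
    have hsdiff : (T \ U).card ≤ 1 := by
      rw [Finset.card_le_one]
      intro x hx y hy
      simp only [Finset.mem_sdiff, hT, hU, Finset.mem_filter, Finset.mem_univ, true_and,
        not_and, not_lt] at hx hy
      obtain ⟨⟨hbx, hxb⟩, hx2⟩ := hx
      obtain ⟨⟨hby, hyb⟩, hy2⟩ := hy
      have hax : w a < w x :=
        lt_of_le_of_ne (hx2 hbx) (fun h => ((hab.trans hbx).ne (w.injective h)).elim ∘ id <| h)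
      have hay : w a < w y :=
        lt_of_le_of_ne (hy2 hby) (fun h => ((hab.trans hby).ne (w.injective h)).elim ∘ id <| h)
      by_contra hne
      rcases (Ne.lt_or_gt hne) with hxy | hxy
      · exact no_two w h1423 h1432 a b x y hab hbx hxy hlt hxb hyb hax hay
      · exact no_two w h1423 h1432 a b y x hab hby hxy hlt hyb hxb hay hax
    have : lehmer w b = T.card := rfl
    rw [this, ← Finset.card_sdiff_add_card_eq_card hUT]
    omega
  · -- w b < w a
    have : lehmer w b ≤ lehmer w a := by
      apply Finset.card_le_card
      intro j hj
      simp only [Finset.mem_filter, Finset.mem_univ, true_and] at hj ⊢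
      exact ⟨hab.trans hj.1, hj.2.trans hgt⟩
    omega
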